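/- The upper central series of the ideal h = span{e_1,…,e_12} of f_13 is: z^1 = ⟨e_11, e_12⟩, z^2 = ⟨e_9,…,e_12⟩, z^3 = ⟨e_7,…,e_12⟩, z^4 = ⟨e_5,…,e_12⟩, z^5 = ⟨e_3,…,e_12⟩, z^6 = h. In particular h is 6-step nilpotent. -/

import Mathlib

open scoped BigOperators

/-- Structure constants of the 13-dimensional filiform Lie algebra `f₁₃`:
`f13SC i j k` is the coefficient of `e_k` in `⁅e_i, e_j⁆` for `i < j`
(and `0` otherwise; the full antisymmetric constants are obtained below). -/
noncomputable def f13SC : ℕ → ℕ → ℕ → ℂ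
  | 0, j, k => if 1 ≤ j ∧ j ≤ 11 ∧ k = j + 1 then 1 else 0
  | 1, 2, 4 => 1
  | 1, 3, 5 => 1
  | 1, 4, 6 => 9/10
  | 1, 4, 8 => -1
  | 1, 5, 7 => 4/5
  | 1, 5, 9 => -2
  | 1, 6, 8 => 5/7
  | 1, 6, 10 => -335/126
  | 1, 6, 12 => 22105/15246
  | 1, 7, 9 => 9/14
  | 1, 7, 11 => -125/42
  | 1, 8, 10 => 7/12
  | 1, 8, 12 => -4421/1452
  | 1, 9, 11 => 8/15
  | 1, 10, 12 => 27/55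
  | 2, 3, 6 => 1/10
  | 2, 3, 8 => 1
  | 2, 4, 7 => 1/10
  | 2, 4, 9 => 1
  | 2, 5, 8 => 3/35
  | 2, 5, 10 => 83/126
  | 2, 5, 12 => -22105/15246
  | 2, 6, 9 => 1/14
  | 2, 6, 11 => 20/63
  | 2, 7, 10 => 5/84
  | 2, 7, 12 => 697/10164
  | 2, 8, 11 => 1/20
  | 2, 9, 12 => 7/165
  | 3, 4, 8 => 1/70
  | 3, 4, 10 => 43/126
  | 3, 4, 12 => 22105/15246
  | 3, 5, 9 => 1/70
  | 3, 5, 11 => 43/126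
  | 3, 6, 10 => 1/84
  | 3, 6, 12 => 7589/30492
  | 3, 7, 11 => 1/105
  | 3, 8, 12 => 1/132
  | 4, 5, 10 => 1/420
  | 4, 5, 12 => 313/3388
  | 4, 6, 11 => 1/420
  | 4, 7, 12 => 3/1540
  | 5, 6, 12 => 1/2310
  | _, _, _ => 0

/-- The full (antisymmetrized) structure constants of `f₁₃`. -/
noncomputable def f13C (i j k : Fin 13) : ℂ :=
  f13SC i j k - f13SC j i k

/-- Structure constants of the ideal `h = ⟨e_1, …, e_12⟩` of `f₁₃`, in the basis
`e_1, …, e_12` (indexed by `Fin 12`, with index `i` corresponding to `e_{i+1}`). -/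
noncomputable def f13hC (i j k : Fin 12) : ℂ :=
  f13SC ((i : ℕ) + 1) ((j : ℕ) + 1) ((k : ℕ) + 1) -
    f13SC ((j : ℕ) + 1) ((i : ℕ) + 1) ((k : ℕ) + 1)


theorem f13SC_grade (a b c : ℕ) (ha : 1 ≤ a) (hc : c < a + b + 1) : f13SC a b c = 0 := by
  exact match a, b, c, ha, hc with
  | 0, _, _, ha, _ => absurd ha (by omega)
  | n+6, _, _, _, _ => rfl
  | 1, n+11, _, _, _ => rfl
  | 1, 0, _, _, _ => rfl
  | 1, 1, _, _, _ => rfl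
  | 1, 2, 0, _, _ => rfl
  | 1, 2, 1, _, _ => rfl
  | 1, 2, 2, _, _ => rfl
  | 1, 2, 3, _, _ => rfl
  | 1, 2, n+4, _, hc => absurd hc (by omega)
  | 1, 3, 0, _, _ => rfl
  | 1, 3, 1, _, _ => rfl
  | 1, 3, 2, _, _ => rfl
  | 1, 3, 3, _, _ => rfl
  | 1, 3, 4, _, _ => rfl
  | 1, 3, n+5, _, hc => absurd hc (by omega)
  | 1, 4, 0, _, _ => rfl
  | 1, 4, 1, _, _ => rfl
  | 1, 4, 2, _, _ => rfl
  | 1, 4, 3, _, _ => rfl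
  | 1, 4, 4, _, _ => rfl
  | 1, 4, 5, _, _ => rfl
  | 1, 4, n+6, _, hc => absurd hc (by omega)
  | 1, 5, 0, _, _ => rfl
  | 1, 5, 1, _, _ => rfl
  | 1, 5, 2, _, _ => rfl
  | 1, 5, 3, _, _ => rfl
  | 1, 5, 4, _, _ => rfl
  | 1, 5, 5, _, _ => rfl
  | 1, 5, 6, _, _ => rfl
  | 1, 5, n+7, _, hc => absurd hc (by omega)
  | 1, 6, 0, _, _ => rfl
  | 1, 6, 1, _, _ => rfl
  | 1, 6, 2, _, _ => rfl
  | 1, 6, 3, _, _ => rfl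
  | 1, 6, 4, _, _ => rfl
  | 1, 6, 5, _, _ => rfl
  | 1, 6, 6, _, _ => rfl
  | 1, 6, 7, _, _ => rfl
  | 1, 6, n+8, _, hc => absurd hc (by omega)
  | 1, 7, 0, _, _ => rfl
  | 1, 7, 1, _, _ => rfl
  | 1, 7, 2, _, _ => rfl
  | 1, 7, 3, _, _ => rfl
  | 1, 7, 4, _, _ => rfl
  | 1, 7, 5, _, _ => rfl
  | 1, 7, 6, _, _ => rfl
  | 1, 7, 7, _, _ => rfl
  | 1, 7, 8, _, _ => rfl
  | 1, 7, n+9, _, hc => absurd hc (by omega)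
  | 1, 8, 0, _, _ => rfl
  | 1, 8, 1, _, _ => rfl
  | 1, 8, 2, _, _ => rfl
  | 1, 8, 3, _, _ => rfl
  | 1, 8, 4, _, _ => rfl
  | 1, 8, 5, _, _ => rfl
  | 1, 8, 6, _, _ => rfl
  | 1, 8, 7, _, _ => rfl
  | 1, 8, 8, _, _ => rfl
  | 1, 8, 9, _, _ => rfl
  | 1, 8, n+10, _, hc => absurd hc (by omega)
  | 1, 9, 0, _, _ => rfl
  | 1, 9, 1, _, _ => rfl
  | 1, 9, 2, _, _ => rfl
  | 1, 9, 3, _, _ => rfl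
  | 1, 9, 4, _, _ => rfl
  | 1, 9, 5, _, _ => rfl
  | 1, 9, 6, _, _ => rfl
  | 1, 9, 7, _, _ => rfl
  | 1, 9, 8, _, _ => rfl
  | 1, 9, 9, _, _ => rfl
  | 1, 9, 10, _, _ => rfl
  | 1, 9, n+11, _, hc => absurd hc (by omega)
  | 1, 10, 0, _, _ => rfl
  | 1, 10, 1, _, _ => rfl
  | 1, 10, 2, _, _ => rfl
  | 1, 10, 3, _, _ => rfl
  | 1, 10, 4, _, _ => rfl
  | 1, 10, 5, _, _ => rfl
  | 1, 10, 6, _, _ => rfl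
  | 1, 10, 7, _, _ => rfl
  | 1, 10, 8, _, _ => rfl
  | 1, 10, 9, _, _ => rfl
  | 1, 10, 10, _, _ => rfl
  | 1, 10, 11, _, _ => rfl
  | 1, 10, n+12, _, hc => absurd hc (by omega)
  | 2, n+10, _, _, _ => rfl
  | 2, 0, _, _, _ => rfl
  | 2, 1, _, _, _ => rfl
  | 2, 2, _, _, _ => rfl
  | 2, 3, 0, _, _ => rfl
  | 2, 3, 1, _, _ => rfl
  | 2, 3, 2, _, _ => rfl
  | 2, 3, 3, _, _ => rfl
  | 2, 3, 4, _, _ => rfl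
  | 2, 3, 5, _, _ => rfl
  | 2, 3, n+6, _, hc => absurd hc (by omega)
  | 2, 4, 0, _, _ => rfl
  | 2, 4, 1, _, _ => rfl
  | 2, 4, 2, _, _ => rfl
  | 2, 4, 3, _, _ => rfl
  | 2, 4, 4, _, _ => rfl
  | 2, 4, 5, _, _ => rfl
  | 2, 4, 6, _, _ => rfl
  | 2, 4, n+7, _, hc => absurd hc (by omega)
  | 2, 5, 0, _, _ => rfl
  | 2, 5, 1, _, _ => rfl
  | 2, 5, 2, _, _ => rfl
  | 2, 5, 3, _, _ => rfl
  | 2, 5, 4, _, _ => rfl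
  | 2, 5, 5, _, _ => rfl
  | 2, 5, 6, _, _ => rfl
  | 2, 5, 7, _, _ => rfl
  | 2, 5, n+8, _, hc => absurd hc (by omega)
  | 2, 6, 0, _, _ => rfl
  | 2, 6, 1, _, _ => rfl
  | 2, 6, 2, _, _ => rfl
  | 2, 6, 3, _, _ => rfl
  | 2, 6, 4, _, _ => rfl
  | 2, 6, 5, _, _ => rfl
  | 2, 6, 6, _, _ => rfl
  | 2, 6, 7, _, _ => rfl
  | 2, 6, 8, _, _ => rfl
  | 2, 6, n+9, _, hc => absurd hc (by omega)
  | 2, 7, 0, _, _ => rfl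
  | 2, 7, 1, _, _ => rfl
  | 2, 7, 2, _, _ => rfl
  | 2, 7, 3, _, _ => rfl
  | 2, 7, 4, _, _ => rfl
  | 2, 7, 5, _, _ => rfl
  | 2, 7, 6, _, _ => rfl
  | 2, 7, 7, _, _ => rfl
  | 2, 7, 8, _, _ => rfl
  | 2, 7, 9, _, _ => rfl
  | 2, 7, n+10, _, hc => absurd hc (by omega)
  | 2, 8, 0, _, _ => rfl
  | 2, 8, 1, _, _ => rfl
  | 2, 8, 2, _, _ => rfl
  | 2, 8, 3, _, _ => rfl
  | 2, 8, 4, _, _ => rfl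
  | 2, 8, 5, _, _ => rfl
  | 2, 8, 6, _, _ => rfl
  | 2, 8, 7, _, _ => rfl
  | 2, 8, 8, _, _ => rfl
  | 2, 8, 9, _, _ => rfl
  | 2, 8, 10, _, _ => rfl
  | 2, 8, n+11, _, hc => absurd hc (by omega)
  | 2, 9, 0, _, _ => rfl
  | 2, 9, 1, _, _ => rfl
  | 2, 9, 2, _, _ => rfl
  | 2, 9, 3, _, _ => rfl
  | 2, 9, 4, _, _ => rfl
  | 2, 9, 5, _, _ => rfl
  | 2, 9, 6, _, _ => rfl
  | 2, 9, 7, _, _ => rfl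
  | 2, 9, 8, _, _ => rfl
  | 2, 9, 9, _, _ => rfl
  | 2, 9, 10, _, _ => rfl
  | 2, 9, 11, _, _ => rfl
  | 2, 9, n+12, _, hc => absurd hc (by omega)
  | 3, n+9, _, _, _ => rfl
  | 3, 0, _, _, _ => rfl
  | 3, 1, _, _, _ => rfl
  | 3, 2, _, _, _ => rfl
  | 3, 3, _, _, _ => rfl
  | 3, 4, 0, _, _ => rfl
  | 3, 4, 1, _, _ => rfl
  | 3, 4, 2, _, _ => rfl
  | 3, 4, 3, _, _ => rfl
  | 3, 4, 4, _, _ => rfl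
  | 3, 4, 5, _, _ => rfl
  | 3, 4, 6, _, _ => rfl
  | 3, 4, 7, _, _ => rfl
  | 3, 4, n+8, _, hc => absurd hc (by omega)
  | 3, 5, 0, _, _ => rfl
  | 3, 5, 1, _, _ => rfl
  | 3, 5, 2, _, _ => rfl
  | 3, 5, 3, _, _ => rfl
  | 3, 5, 4, _, _ => rfl
  | 3, 5, 5, _, _ => rfl
  | 3, 5, 6, _, _ => rfl
  | 3, 5, 7, _, _ => rfl
  | 3, 5, 8, _, _ => rfl
  | 3, 5, n+9, _, hc => absurd hc (by omega)
  | 3, 6, 0, _, _ => rfl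
  | 3, 6, 1, _, _ => rfl
  | 3, 6, 2, _, _ => rfl
  | 3, 6, 3, _, _ => rfl
  | 3, 6, 4, _, _ => rfl
  | 3, 6, 5, _, _ => rfl
  | 3, 6, 6, _, _ => rfl
  | 3, 6, 7, _, _ => rfl
  | 3, 6, 8, _, _ => rfl
  | 3, 6, 9, _, _ => rfl
  | 3, 6, n+10, _, hc => absurd hc (by omega)
  | 3, 7, 0, _, _ => rfl
  | 3, 7, 1, _, _ => rfl
  | 3, 7, 2, _, _ => rfl
  | 3, 7, 3, _, _ => rfl
  | 3, 7, 4, _, _ => rfl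
  | 3, 7, 5, _, _ => rfl
  | 3, 7, 6, _, _ => rfl
  | 3, 7, 7, _, _ => rfl
  | 3, 7, 8, _, _ => rfl
  | 3, 7, 9, _, _ => rfl
  | 3, 7, 10, _, _ => rfl
  | 3, 7, n+11, _, hc => absurd hc (by omega)
  | 3, 8, 0, _, _ => rfl
  | 3, 8, 1, _, _ => rfl
  | 3, 8, 2, _, _ => rfl
  | 3, 8, 3, _, _ => rfl
  | 3, 8, 4, _, _ => rfl
  | 3, 8, 5, _, _ => rfl
  | 3, 8, 6, _, _ => rfl
  | 3, 8, 7, _, _ => rfl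
  | 3, 8, 8, _, _ => rfl
  | 3, 8, 9, _, _ => rfl
  | 3, 8, 10, _, _ => rfl
  | 3, 8, 11, _, _ => rfl
  | 3, 8, n+12, _, hc => absurd hc (by omega)
  | 4, n+8, _, _, _ => rfl
  | 4, 0, _, _, _ => rfl
  | 4, 1, _, _, _ => rfl
  | 4, 2, _, _, _ => rfl
  | 4, 3, _, _, _ => rfl
  | 4, 4, _, _, _ => rfl
  | 4, 5, 0, _, _ => rfl
  | 4, 5, 1, _, _ => rfl
  | 4, 5, 2, _, _ => rfl
  | 4, 5, 3, _, _ => rfl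
  | 4, 5, 4, _, _ => rfl
  | 4, 5, 5, _, _ => rfl
  | 4, 5, 6, _, _ => rfl
  | 4, 5, 7, _, _ => rfl
  | 4, 5, 8, _, _ => rfl
  | 4, 5, 9, _, _ => rfl
  | 4, 5, n+10, _, hc => absurd hc (by omega)
  | 4, 6, 0, _, _ => rfl
  | 4, 6, 1, _, _ => rfl
  | 4, 6, 2, _, _ => rfl
  | 4, 6, 3, _, _ => rfl
  | 4, 6, 4, _, _ => rfl
  | 4, 6, 5, _, _ => rfl
  | 4, 6, 6, _, _ => rfl
  | 4, 6, 7, _, _ => rfl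
  | 4, 6, 8, _, _ => rfl
  | 4, 6, 9, _, _ => rfl
  | 4, 6, 10, _, _ => rfl
  | 4, 6, n+11, _, hc => absurd hc (by omega)
  | 4, 7, 0, _, _ => rfl
  | 4, 7, 1, _, _ => rfl
  | 4, 7, 2, _, _ => rfl
  | 4, 7, 3, _, _ => rfl
  | 4, 7, 4, _, _ => rfl
  | 4, 7, 5, _, _ => rfl
  | 4, 7, 6, _, _ => rfl
  | 4, 7, 7, _, _ => rfl
  | 4, 7, 8, _, _ => rfl
  | 4, 7, 9, _, _ => rfl
  | 4, 7, 10, _, _ => rfl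
  | 4, 7, 11, _, _ => rfl
  | 4, 7, n+12, _, hc => absurd hc (by omega)
  | 5, n+7, _, _, _ => rfl
  | 5, 0, _, _, _ => rfl
  | 5, 1, _, _, _ => rfl
  | 5, 2, _, _, _ => rfl
  | 5, 3, _, _, _ => rfl
  | 5, 4, _, _, _ => rfl
  | 5, 5, _, _, _ => rfl
  | 5, 6, 0, _, _ => rfl
  | 5, 6, 1, _, _ => rfl
  | 5, 6, 2, _, _ => rfl
  | 5, 6, 3, _, _ => rfl
  | 5, 6, 4, _, _ => rfl
  | 5, 6, 5, _, _ => rfl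
  | 5, 6, 6, _, _ => rfl
  | 5, 6, 7, _, _ => rfl
  | 5, 6, 8, _, _ => rfl
  | 5, 6, 9, _, _ => rfl
  | 5, 6, 10, _, _ => rfl
  | 5, 6, 11, _, _ => rfl
  | 5, 6, n+12, _, hc => absurd hc (by omega)

theorem sum12 (f : Fin 12 → ℂ) : ∑ j, f j =
    f 0 + f 1 + f 2 + f 3 + f 4 + f 5 + f 6 + f 7 + f 8 + f 9 + f 10 + f 11 := by
  rw [Fin.sum_univ_castSucc, Fin.sum_univ_castSucc, Fin.sum_univ_castSucc,
    Fin.sum_univ_castSucc, Fin.sum_univ_eight]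
  rfl

theorem f13hC_grade (i j m : Fin 12) (h : (m : ℕ) < (i : ℕ) + (j : ℕ) + 2) : f13hC i j m = 0 := by
  unfold f13hC
  rw [f13SC_grade _ _ _ (by omega) (by omega), f13SC_grade _ _ _ (by omega) (by omega), sub_zero]

section
variable {L : Type*} [LieRing L] [LieAlgebra ℂ L] (B : Module.Basis (Fin 12) ℂ L)

theorem lie_sum' (x : L) {ι : Type*} (s : Finset ι) (f : ι → L) :
    ⁅x, ∑ i ∈ s, f i⁆ = ∑ i ∈ s, ⁅x, f i⁆ :=
  map_sum (AddMonoidHom.mk' (fun y => ⁅x, y⁆) (fun _ _ => lie_add x _ _)) f s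

theorem repr_bracket (hB : ∀ i j : Fin 12, ⁅B i, B j⁆ = ∑ k : Fin 12, f13hC i j k • B k)
    (i : Fin 12) (x : L) (m : Fin 12) :
    B.repr ⁅B i, x⁆ m = ∑ j, f13hC i j m * B.repr x j := by
  conv_lhs => rw [← B.sum_repr x]
  rw [lie_sum']
  simp only [lie_smul, hB, map_sum, map_smul, Finsupp.smul_apply, Finsupp.finset_sum_apply,
    Module.Basis.repr_self, Finsupp.single_apply, smul_eq_mul, mul_ite, mul_one, mul_zero,
    Finset.sum_ite_eq', Finset.mem_univ, if_true]
  exact Finset.sum_congr rfl fun j _ => mul_comm _ _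

theorem mem_span_cut (t : ℕ) (x : L) :
    x ∈ Submodule.span ℂ (B '' {j : Fin 12 | t ≤ (j : ℕ)}) ↔
      ∀ j : Fin 12, (j : ℕ) < t → B.repr x j = 0 := by
  rw [Module.Basis.mem_span_image]
  constructor
  · intro h j hj
    by_contra hne
    have := h (Finsupp.mem_support_iff.mpr hne)
    simp only [Set.mem_setOf_eq] at this
    omega
  · intro h j hj
    simp only [Finset.mem_coe, Finsupp.mem_support_iff] at hj
    simp only [Set.mem_setOf_eq]
    by_contra hlt
    exact hj (h j (by omega))

end
theorem ev0_0_3 : f13hC 0 0 3 = 0 := by show (0 : ℂ) - 0 = 0; norm_num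
theorem ev0_1_3 : f13hC 0 1 3 = 1 := by show (1 : ℂ) - 0 = 1; norm_num
theorem ev0_2_3 : f13hC 0 2 3 = 0 := by show (0 : ℂ) - 0 = 0; norm_num
theorem ev0_3_3 : f13hC 0 3 3 = 0 := by show (0 : ℂ) - 0 = 0; norm_num
theorem ev0_4_3 : f13hC 0 4 3 = 0 := by show (0 : ℂ) - 0 = 0; norm_num
theorem ev0_5_3 : f13hC 0 5 3 = 0 := by show (0 : ℂ) - 0 = 0; norm_num
theorem ev0_6_3 : f13hC 0 6 3 = 0 := by show (0 : ℂ) - 0 = 0; norm_num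
theorem ev0_7_3 : f13hC 0 7 3 = 0 := by show (0 : ℂ) - 0 = 0; norm_num
theorem ev0_8_3 : f13hC 0 8 3 = 0 := by show (0 : ℂ) - 0 = 0; norm_num
theorem ev0_9_3 : f13hC 0 9 3 = 0 := by show (0 : ℂ) - 0 = 0; norm_num
theorem ev0_10_3 : f13hC 0 10 3 = 0 := by show (0 : ℂ) - 0 = 0; norm_num
theorem ev0_11_3 : f13hC 0 11 3 = 0 := by show (0 : ℂ) - 0 = 0; norm_num
theorem ev0_0_4 : f13hC 0 0 4 = 0 := by show (0 : ℂ) - 0 = 0; norm_num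
theorem ev0_1_4 : f13hC 0 1 4 = 0 := by show (0 : ℂ) - 0 = 0; norm_num
theorem ev0_2_4 : f13hC 0 2 4 = 1 := by show (1 : ℂ) - 0 = 1; norm_num
theorem ev0_3_4 : f13hC 0 3 4 = 0 := by show (0 : ℂ) - 0 = 0; norm_num
theorem ev0_4_4 : f13hC 0 4 4 = 0 := by show (0 : ℂ) - 0 = 0; norm_num
theorem ev0_5_4 : f13hC 0 5 4 = 0 := by show (0 : ℂ) - 0 = 0; norm_num
theorem ev0_6_4 : f13hC 0 6 4 = 0 := by show (0 : ℂ) - 0 = 0; norm_num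
theorem ev0_7_4 : f13hC 0 7 4 = 0 := by show (0 : ℂ) - 0 = 0; norm_num
theorem ev0_8_4 : f13hC 0 8 4 = 0 := by show (0 : ℂ) - 0 = 0; norm_num
theorem ev0_9_4 : f13hC 0 9 4 = 0 := by show (0 : ℂ) - 0 = 0; norm_num
theorem ev0_10_4 : f13hC 0 10 4 = 0 := by show (0 : ℂ) - 0 = 0; norm_num
theorem ev0_11_4 : f13hC 0 11 4 = 0 := by show (0 : ℂ) - 0 = 0; norm_num
theorem ev0_0_5 : f13hC 0 0 5 = 0 := by show (0 : ℂ) - 0 = 0; norm_num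
theorem ev0_1_5 : f13hC 0 1 5 = 0 := by show (0 : ℂ) - 0 = 0; norm_num
theorem ev0_2_5 : f13hC 0 2 5 = 0 := by show (0 : ℂ) - 0 = 0; norm_num
theorem ev0_3_5 : f13hC 0 3 5 = 9/10 := by show (9/10 : ℂ) - 0 = 9/10; norm_num
theorem ev0_4_5 : f13hC 0 4 5 = 0 := by show (0 : ℂ) - 0 = 0; norm_num
theorem ev0_5_5 : f13hC 0 5 5 = 0 := by show (0 : ℂ) - 0 = 0; norm_num
theorem ev0_6_5 : f13hC 0 6 5 = 0 := by show (0 : ℂ) - 0 = 0; norm_num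
theorem ev0_7_5 : f13hC 0 7 5 = 0 := by show (0 : ℂ) - 0 = 0; norm_num
theorem ev0_8_5 : f13hC 0 8 5 = 0 := by show (0 : ℂ) - 0 = 0; norm_num
theorem ev0_9_5 : f13hC 0 9 5 = 0 := by show (0 : ℂ) - 0 = 0; norm_num
theorem ev0_10_5 : f13hC 0 10 5 = 0 := by show (0 : ℂ) - 0 = 0; norm_num
theorem ev0_11_5 : f13hC 0 11 5 = 0 := by show (0 : ℂ) - 0 = 0; norm_num
theorem ev0_0_6 : f13hC 0 0 6 = 0 := by show (0 : ℂ) - 0 = 0; norm_num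
theorem ev0_1_6 : f13hC 0 1 6 = 0 := by show (0 : ℂ) - 0 = 0; norm_num
theorem ev0_2_6 : f13hC 0 2 6 = 0 := by show (0 : ℂ) - 0 = 0; norm_num
theorem ev0_3_6 : f13hC 0 3 6 = 0 := by show (0 : ℂ) - 0 = 0; norm_num
theorem ev0_4_6 : f13hC 0 4 6 = 4/5 := by show (4/5 : ℂ) - 0 = 4/5; norm_num
theorem ev0_5_6 : f13hC 0 5 6 = 0 := by show (0 : ℂ) - 0 = 0; norm_num
theorem ev0_6_6 : f13hC 0 6 6 = 0 := by show (0 : ℂ) - 0 = 0; norm_num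
theorem ev0_7_6 : f13hC 0 7 6 = 0 := by show (0 : ℂ) - 0 = 0; norm_num
theorem ev0_8_6 : f13hC 0 8 6 = 0 := by show (0 : ℂ) - 0 = 0; norm_num
theorem ev0_9_6 : f13hC 0 9 6 = 0 := by show (0 : ℂ) - 0 = 0; norm_num
theorem ev0_10_6 : f13hC 0 10 6 = 0 := by show (0 : ℂ) - 0 = 0; norm_num
theorem ev0_11_6 : f13hC 0 11 6 = 0 := by show (0 : ℂ) - 0 = 0; norm_num
theorem ev0_0_7 : f13hC 0 0 7 = 0 := by show (0 : ℂ) - 0 = 0; norm_num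
theorem ev0_1_7 : f13hC 0 1 7 = 0 := by show (0 : ℂ) - 0 = 0; norm_num
theorem ev0_2_7 : f13hC 0 2 7 = 0 := by show (0 : ℂ) - 0 = 0; norm_num
theorem ev0_3_7 : f13hC 0 3 7 = -1 := by show (-1 : ℂ) - 0 = -1; norm_num
theorem ev0_4_7 : f13hC 0 4 7 = 0 := by show (0 : ℂ) - 0 = 0; norm_num
theorem ev0_5_7 : f13hC 0 5 7 = 5/7 := by show (5/7 : ℂ) - 0 = 5/7; norm_num
theorem ev0_6_7 : f13hC 0 6 7 = 0 := by show (0 : ℂ) - 0 = 0; norm_num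
theorem ev0_7_7 : f13hC 0 7 7 = 0 := by show (0 : ℂ) - 0 = 0; norm_num
theorem ev0_8_7 : f13hC 0 8 7 = 0 := by show (0 : ℂ) - 0 = 0; norm_num
theorem ev0_9_7 : f13hC 0 9 7 = 0 := by show (0 : ℂ) - 0 = 0; norm_num
theorem ev0_10_7 : f13hC 0 10 7 = 0 := by show (0 : ℂ) - 0 = 0; norm_num
theorem ev0_11_7 : f13hC 0 11 7 = 0 := by show (0 : ℂ) - 0 = 0; norm_num
theorem ev0_0_8 : f13hC 0 0 8 = 0 := by show (0 : ℂ) - 0 = 0; norm_num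
theorem ev0_1_8 : f13hC 0 1 8 = 0 := by show (0 : ℂ) - 0 = 0; norm_num
theorem ev0_2_8 : f13hC 0 2 8 = 0 := by show (0 : ℂ) - 0 = 0; norm_num
theorem ev0_3_8 : f13hC 0 3 8 = 0 := by show (0 : ℂ) - 0 = 0; norm_num
theorem ev0_4_8 : f13hC 0 4 8 = -2 := by show (-2 : ℂ) - 0 = -2; norm_num
theorem ev0_5_8 : f13hC 0 5 8 = 0 := by show (0 : ℂ) - 0 = 0; norm_num
theorem ev0_6_8 : f13hC 0 6 8 = 9/14 := by show (9/14 : ℂ) - 0 = 9/14; norm_num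
theorem ev0_7_8 : f13hC 0 7 8 = 0 := by show (0 : ℂ) - 0 = 0; norm_num
theorem ev0_8_8 : f13hC 0 8 8 = 0 := by show (0 : ℂ) - 0 = 0; norm_num
theorem ev0_9_8 : f13hC 0 9 8 = 0 := by show (0 : ℂ) - 0 = 0; norm_num
theorem ev0_10_8 : f13hC 0 10 8 = 0 := by show (0 : ℂ) - 0 = 0; norm_num
theorem ev0_11_8 : f13hC 0 11 8 = 0 := by show (0 : ℂ) - 0 = 0; norm_num
theorem ev0_0_9 : f13hC 0 0 9 = 0 := by show (0 : ℂ) - 0 = 0; norm_num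
theorem ev0_1_9 : f13hC 0 1 9 = 0 := by show (0 : ℂ) - 0 = 0; norm_num
theorem ev0_2_9 : f13hC 0 2 9 = 0 := by show (0 : ℂ) - 0 = 0; norm_num
theorem ev0_3_9 : f13hC 0 3 9 = 0 := by show (0 : ℂ) - 0 = 0; norm_num
theorem ev0_4_9 : f13hC 0 4 9 = 0 := by show (0 : ℂ) - 0 = 0; norm_num
theorem ev0_5_9 : f13hC 0 5 9 = -335/126 := by show (-335/126 : ℂ) - 0 = -335/126; norm_num
theorem ev0_6_9 : f13hC 0 6 9 = 0 := by show (0 : ℂ) - 0 = 0; norm_num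
theorem ev0_7_9 : f13hC 0 7 9 = 7/12 := by show (7/12 : ℂ) - 0 = 7/12; norm_num
theorem ev0_8_9 : f13hC 0 8 9 = 0 := by show (0 : ℂ) - 0 = 0; norm_num
theorem ev0_9_9 : f13hC 0 9 9 = 0 := by show (0 : ℂ) - 0 = 0; norm_num
theorem ev0_10_9 : f13hC 0 10 9 = 0 := by show (0 : ℂ) - 0 = 0; norm_num
theorem ev0_11_9 : f13hC 0 11 9 = 0 := by show (0 : ℂ) - 0 = 0; norm_num
theorem ev0_0_10 : f13hC 0 0 10 = 0 := by show (0 : ℂ) - 0 = 0; norm_num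
theorem ev0_1_10 : f13hC 0 1 10 = 0 := by show (0 : ℂ) - 0 = 0; norm_num
theorem ev0_2_10 : f13hC 0 2 10 = 0 := by show (0 : ℂ) - 0 = 0; norm_num
theorem ev0_3_10 : f13hC 0 3 10 = 0 := by show (0 : ℂ) - 0 = 0; norm_num
theorem ev0_4_10 : f13hC 0 4 10 = 0 := by show (0 : ℂ) - 0 = 0; norm_num
theorem ev0_5_10 : f13hC 0 5 10 = 0 := by show (0 : ℂ) - 0 = 0; norm_num
theorem ev0_6_10 : f13hC 0 6 10 = -125/42 := by show (-125/42 : ℂ) - 0 = -125/42; norm_num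
theorem ev0_7_10 : f13hC 0 7 10 = 0 := by show (0 : ℂ) - 0 = 0; norm_num
theorem ev0_8_10 : f13hC 0 8 10 = 8/15 := by show (8/15 : ℂ) - 0 = 8/15; norm_num
theorem ev0_9_10 : f13hC 0 9 10 = 0 := by show (0 : ℂ) - 0 = 0; norm_num
theorem ev0_10_10 : f13hC 0 10 10 = 0 := by show (0 : ℂ) - 0 = 0; norm_num
theorem ev0_11_10 : f13hC 0 11 10 = 0 := by show (0 : ℂ) - 0 = 0; norm_num
theorem ev0_0_11 : f13hC 0 0 11 = 0 := by show (0 : ℂ) - 0 = 0; norm_num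
theorem ev0_1_11 : f13hC 0 1 11 = 0 := by show (0 : ℂ) - 0 = 0; norm_num
theorem ev0_2_11 : f13hC 0 2 11 = 0 := by show (0 : ℂ) - 0 = 0; norm_num
theorem ev0_3_11 : f13hC 0 3 11 = 0 := by show (0 : ℂ) - 0 = 0; norm_num
theorem ev0_4_11 : f13hC 0 4 11 = 0 := by show (0 : ℂ) - 0 = 0; norm_num
theorem ev0_5_11 : f13hC 0 5 11 = 22105/15246 := by show (22105/15246 : ℂ) - 0 = 22105/15246; norm_num
theorem ev0_6_11 : f13hC 0 6 11 = 0 := by show (0 : ℂ) - 0 = 0; norm_num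
theorem ev0_7_11 : f13hC 0 7 11 = -4421/1452 := by show (-4421/1452 : ℂ) - 0 = -4421/1452; norm_num
theorem ev0_8_11 : f13hC 0 8 11 = 0 := by show (0 : ℂ) - 0 = 0; norm_num
theorem ev0_9_11 : f13hC 0 9 11 = 27/55 := by show (27/55 : ℂ) - 0 = 27/55; norm_num
theorem ev0_10_11 : f13hC 0 10 11 = 0 := by show (0 : ℂ) - 0 = 0; norm_num
theorem ev0_11_11 : f13hC 0 11 11 = 0 := by show (0 : ℂ) - 0 = 0; norm_num
theorem ev1_0_3 : f13hC 1 0 3 = -1 := by show (0 : ℂ) - 1 = -1; norm_num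
theorem ev1_1_3 : f13hC 1 1 3 = 0 := by show (0 : ℂ) - 0 = 0; norm_num
theorem ev1_2_3 : f13hC 1 2 3 = 0 := by show (0 : ℂ) - 0 = 0; norm_num
theorem ev1_3_3 : f13hC 1 3 3 = 0 := by show (0 : ℂ) - 0 = 0; norm_num
theorem ev1_4_3 : f13hC 1 4 3 = 0 := by show (0 : ℂ) - 0 = 0; norm_num
theorem ev1_5_3 : f13hC 1 5 3 = 0 := by show (0 : ℂ) - 0 = 0; norm_num
theorem ev1_6_3 : f13hC 1 6 3 = 0 := by show (0 : ℂ) - 0 = 0; norm_num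
theorem ev1_7_3 : f13hC 1 7 3 = 0 := by show (0 : ℂ) - 0 = 0; norm_num
theorem ev1_8_3 : f13hC 1 8 3 = 0 := by show (0 : ℂ) - 0 = 0; norm_num
theorem ev1_9_3 : f13hC 1 9 3 = 0 := by show (0 : ℂ) - 0 = 0; norm_num
theorem ev1_10_3 : f13hC 1 10 3 = 0 := by show (0 : ℂ) - 0 = 0; norm_num
theorem ev1_11_3 : f13hC 1 11 3 = 0 := by show (0 : ℂ) - 0 = 0; norm_num
theorem key (t : ℕ) (ht4 : 4 ≤ t) (ht12 : t ≤ 12) (c : Fin 12 → ℂ)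
    (h0 : ∀ m : Fin 12, (m : ℕ) < t → ∑ j, f13hC 0 j m * c j = 0)
    (h1 : ∑ j, f13hC 1 j 3 * c j = 0) :
    ∀ j : Fin 12, (j : ℕ) < t - 2 → c j = 0 := by
  have hc0 : c 0 = 0 := by
    have e := h1
    rw [sum12] at e
    simp only [ev1_0_3, ev1_1_3, ev1_2_3, ev1_3_3, ev1_4_3, ev1_5_3, ev1_6_3, ev1_7_3, ev1_8_3, ev1_9_3, ev1_10_3, ev1_11_3] at e
    linear_combination -e
  have hc1 : ∀ _ : 3 < t, c 1 = 0 := fun h => by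
    have e := h0 3 (show (3:ℕ) < t from h)
    rw [sum12] at e
    simp only [ev0_0_3, ev0_1_3, ev0_2_3, ev0_3_3, ev0_4_3, ev0_5_3, ev0_6_3, ev0_7_3, ev0_8_3, ev0_9_3, ev0_10_3, ev0_11_3] at e
    linear_combination e
  have hc2 : ∀ _ : 4 < t, c 2 = 0 := fun h => by
    have e := h0 4 (show (4:ℕ) < t from h)
    rw [sum12] at e
    simp only [ev0_0_4, ev0_1_4, ev0_2_4, ev0_3_4, ev0_4_4, ev0_5_4, ev0_6_4, ev0_7_4, ev0_8_4, ev0_9_4, ev0_10_4, ev0_11_4] at e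
    linear_combination e
  have hc3 : ∀ _ : 5 < t, c 3 = 0 := fun h => by
    have e := h0 5 (show (5:ℕ) < t from h)
    rw [sum12] at e
    simp only [ev0_0_5, ev0_1_5, ev0_2_5, ev0_3_5, ev0_4_5, ev0_5_5, ev0_6_5, ev0_7_5, ev0_8_5, ev0_9_5, ev0_10_5, ev0_11_5] at e
    linear_combination (10/9 : ℂ) * e
  have hc4 : ∀ _ : 6 < t, c 4 = 0 := fun h => by
    have e := h0 6 (show (6:ℕ) < t from h)
    rw [sum12] at e
    simp only [ev0_0_6, ev0_1_6, ev0_2_6, ev0_3_6, ev0_4_6, ev0_5_6, ev0_6_6, ev0_7_6, ev0_8_6, ev0_9_6, ev0_10_6, ev0_11_6] at e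
    linear_combination (5/4 : ℂ) * e
  have hc5 : ∀ _ : 7 < t, c 5 = 0 := fun h => by
    have e := h0 7 (show (7:ℕ) < t from h)
    rw [sum12] at e
    simp only [ev0_0_7, ev0_1_7, ev0_2_7, ev0_3_7, ev0_4_7, ev0_5_7, ev0_6_7, ev0_7_7, ev0_8_7, ev0_9_7, ev0_10_7, ev0_11_7] at e
    linear_combination (7/5 : ℂ) * e + (7/5 : ℂ) * hc3 (by omega)
  have hc6 : ∀ _ : 8 < t, c 6 = 0 := fun h => by
    have e := h0 8 (show (8:ℕ) < t from h)
    rw [sum12] at e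
    simp only [ev0_0_8, ev0_1_8, ev0_2_8, ev0_3_8, ev0_4_8, ev0_5_8, ev0_6_8, ev0_7_8, ev0_8_8, ev0_9_8, ev0_10_8, ev0_11_8] at e
    linear_combination (14/9 : ℂ) * e + (28/9 : ℂ) * hc4 (by omega)
  have hc7 : ∀ _ : 9 < t, c 7 = 0 := fun h => by
    have e := h0 9 (show (9:ℕ) < t from h)
    rw [sum12] at e
    simp only [ev0_0_9, ev0_1_9, ev0_2_9, ev0_3_9, ev0_4_9, ev0_5_9, ev0_6_9, ev0_7_9, ev0_8_9, ev0_9_9, ev0_10_9, ev0_11_9] at e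
    linear_combination (12/7 : ℂ) * e + (670/147 : ℂ) * hc5 (by omega)
  have hc8 : ∀ _ : 10 < t, c 8 = 0 := fun h => by
    have e := h0 10 (show (10:ℕ) < t from h)
    rw [sum12] at e
    simp only [ev0_0_10, ev0_1_10, ev0_2_10, ev0_3_10, ev0_4_10, ev0_5_10, ev0_6_10, ev0_7_10, ev0_8_10, ev0_9_10, ev0_10_10, ev0_11_10] at e
    linear_combination (15/8 : ℂ) * e + (625/112 : ℂ) * hc6 (by omega)
  have hc9 : ∀ _ : 11 < t, c 9 = 0 := fun h => by
    have e := h0 11 (show (11:ℕ) < t from h)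
    rw [sum12] at e
    simp only [ev0_0_11, ev0_1_11, ev0_2_11, ev0_3_11, ev0_4_11, ev0_5_11, ev0_6_11, ev0_7_11, ev0_8_11, ev0_9_11, ev0_10_11, ev0_11_11] at e
    linear_combination (55/27 : ℂ) * e + (-1215775/411642 : ℂ) * hc5 (by omega) + (243155/39204 : ℂ) * hc7 (by omega)
  intro j hj
  obtain ⟨jv, hlt⟩ := j
  have hj' : jv < t - 2 := hj
  interval_cases jv
  · exact hc0
  · exact hc1 (by omega)
  · exact hc2 (by omega)
  · exact hc3 (by omega)
  · exact hc4 (by omega)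
  · exact hc5 (by omega)
  · exact hc6 (by omega)
  · exact hc7 (by omega)
  · exact hc8 (by omega)
  · exact hc9 (by omega)
  · exact absurd hj' (by omega)
  · exact absurd hj' (by omega)

/-- The upper central series of `h = ⟨e_1, …, e_12⟩` is
`z^1 = ⟨e_11, e_12⟩`, `z^2 = ⟨e_9, …, e_12⟩`, `z^3 = ⟨e_7, …, e_12⟩`,
`z^4 = ⟨e_5, …, e_12⟩`, `z^5 = ⟨e_3, …, e_12⟩`, `z^6 = h`
(`B j` corresponds to `e_{j+1}`, so `z^k = span {e_{j+1} : 12 - 2k ≤ j}` for `1 ≤ k ≤ 5`);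
in particular `h` is nilpotent of class exactly `6`. -/
theorem f13_ideal_h_upperCentralSeries
    (L : Type*) [LieRing L] [LieAlgebra ℂ L]
    (B : Module.Basis (Fin 12) ℂ L)
    (hB : ∀ i j : Fin 12, ⁅B i, B j⁆ = ∑ k : Fin 12, f13hC i j k • B k) :
    (∀ k : ℕ, 1 ≤ k → k ≤ 5 →
      (LieSubmodule.ucs k (⊥ : LieIdeal ℂ L) : Submodule ℂ L)
        = Submodule.span ℂ (B '' {j : Fin 12 | 12 - 2 * k ≤ (j : ℕ)})) ∧
    LieSubmodule.ucs 6 (⊥ : LieIdeal ℂ L) = ⊤ ∧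
    LieSubmodule.ucs 5 (⊥ : LieIdeal ℂ L) ≠ ⊤ := by
  have main : ∀ k : ℕ, k ≤ 6 →
      LieSubmodule.toSubmodule (LieSubmodule.ucs k (⊥ : LieIdeal ℂ L))
        = Submodule.span ℂ (B '' {j : Fin 12 | 12 - 2 * k ≤ (j : ℕ)}) := by
    intro k
    induction k with
    | zero =>
      intro _
      rw [LieSubmodule.ucs_zero, LieSubmodule.bot_toSubmodule]
      have hs : {j : Fin 12 | 12 - 2 * 0 ≤ (j : ℕ)} = (∅ : Set (Fin 12)) := by
        ext j
        have := j.isLt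
        simp only [Set.mem_setOf_eq, Set.mem_empty_iff_false, iff_false, not_le]
        omega
      rw [hs, Set.image_empty, Submodule.span_empty]
    | succ k ih =>
      intro hk6
      have ih' := ih (by omega)
      rw [LieSubmodule.ucs_succ]
      apply le_antisymm
      · -- ≤ : normalizer ⊆ span
        intro x hx
        rw [LieSubmodule.mem_toSubmodule, LieSubmodule.mem_normalizer] at hx
        by_cases hk5 : k = 5
        · subst hk5
          have hs : {j : Fin 12 | 12 - 2 * (5 + 1) ≤ (j : ℕ)} = Set.univ := by
            ext j; simp
          rw [hs, Set.image_univ, B.span_eq]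
          exact Submodule.mem_top
        · rw [show (12 - 2 * (k + 1)) = 12 - 2 * k - 2 by omega, mem_span_cut]
          apply key (12 - 2 * k) (by omega) (by omega)
          · intro m hm
            rw [← repr_bracket B hB 0 x m]
            refine (mem_span_cut B _ _).mp ?_ m hm
            rw [← ih', LieSubmodule.mem_toSubmodule]
            exact hx (B 0)
          · rw [← repr_bracket B hB 1 x 3]
            refine (mem_span_cut B _ _).mp ?_ 3 (show (3 : ℕ) < 12 - 2 * k from by omega)
            rw [← ih', LieSubmodule.mem_toSubmodule]
            exact hx (B 1)
      · -- ≥ : span ⊆ normalizer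
        rw [Submodule.span_le]
        rintro _ ⟨j, hj, rfl⟩
        simp only [Set.mem_setOf_eq] at hj
        rw [SetLike.mem_coe, LieSubmodule.mem_toSubmodule, LieSubmodule.mem_normalizer]
        have hbase : ∀ i : Fin 12,
            ⁅B i, B j⁆ ∈ LieSubmodule.toSubmodule (LieSubmodule.ucs k (⊥ : LieIdeal ℂ L)) := by
          intro i
          rw [ih', hB]
          apply Submodule.sum_mem
          intro m _
          by_cases hm : 12 - 2 * k ≤ (m : ℕ)
          · exact Submodule.smul_mem _ _ (Submodule.subset_span ⟨m, hm, rfl⟩)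
          · rw [f13hC_grade i j m (by omega), zero_smul]
            exact Submodule.zero_mem _
        have hall : ∀ y : L, y ∈ Submodule.span ℂ (Set.range B) →
            ⁅y, B j⁆ ∈ LieSubmodule.toSubmodule (LieSubmodule.ucs k (⊥ : LieIdeal ℂ L)) := by
          intro y hy
          induction hy using Submodule.span_induction with
          | mem z hz => obtain ⟨i, rfl⟩ := hz; exact hbase i
          | zero => rw [zero_lie]; exact Submodule.zero_mem _
          | add a b _ _ ha hb => rw [add_lie]; exact Submodule.add_mem _ ha hb
          | smul t a _ ha => rw [smul_lie]; exact Submodule.smul_mem _ t ha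
        intro y
        rw [← LieSubmodule.mem_toSubmodule]
        exact hall y (by rw [B.span_eq]; exact Submodule.mem_top)
  refine ⟨fun k hk1 hk5 => by rw [LieIdeal.toLieSubalgebra_toSubmodule]; exact main k (by omega), ?_, ?_⟩
  · have h6 := main 6 le_rfl
    have hs : {j : Fin 12 | 12 - 2 * 6 ≤ (j : ℕ)} = Set.univ := by
      ext j; simp
    rw [hs, Set.image_univ, B.span_eq] at h6
    exact (LieSubmodule.toSubmodule_eq_top (N := _)).mp h6
  · intro htop
    have h5 := main 5 (by omega)
    rw [htop, LieSubmodule.top_toSubmodule] at h5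
    have hmem : B 0 ∈ Submodule.span ℂ (B '' {j : Fin 12 | 12 - 2 * 5 ≤ (j : ℕ)}) := by
      rw [← h5]; exact Submodule.mem_top
    have h0 := (mem_span_cut B _ _).mp hmem 0 (show (0 : ℕ) < 12 - 2 * 5 from by omega)
    rw [B.repr_self] at h0
    simpa using h0
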